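/- Suppose for each device k and each step t, E‖∇L_k(w_t^k, ξ_t^k)‖² ≤ G², the stepsizes η_t are non-increasing with η_t ≤ 2η_{t+E}, and each device takes at most E - 1 local SGD steps since the last synchronization step t_0 (where w_{t_0}^k = w̄_{t_0} is common to all devices). Let w̄_t = ∑_k p_k w_t^k with weights p_k ≥ 0 summing to 1. Then E[∑_k p_k ‖w̄_t - w_t^k‖²] ≤ 4 η_t² (E - 1)² G². -/

import Mathlib

open MeasureTheory Finset
open scoped ENNReal NNReal

section Helpers

variable {H : Type*} [NormedAddCommGroup H] [InnerProductSpace ℝ H]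

lemma jensen_sq {ι : Type*} (s : Finset ι) (f : ι → H) :
    ‖∑ i ∈ s, f i‖ ^ 2 ≤ (s.card : ℝ) * ∑ i ∈ s, ‖f i‖ ^ 2 := by
  calc ‖∑ i ∈ s, f i‖ ^ 2 ≤ (∑ i ∈ s, ‖f i‖) ^ 2 := by
        apply pow_le_pow_left₀ (norm_nonneg _) (norm_sum_le _ _)
    _ ≤ (s.card : ℝ) * ∑ i ∈ s, ‖f i‖ ^ 2 := sq_sum_le_card_mul_sum_sq

lemma var_bound {N : ℕ} (p : Fin N → ℝ) (hp : ∀ k, 0 ≤ p k) (hpsum : ∑ k, p k = 1)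
    (v : Fin N → H) :
    ∑ k, p k * ‖(∑ k', p k' • v k') - v k‖ ^ 2 ≤ ∑ k, p k * ‖v k‖ ^ 2 := by
  set m : H := ∑ k', p k' • v k' with hm
  have key : ∀ k, ‖m - v k‖ ^ 2 = ‖m‖ ^ 2 - 2 * inner ℝ m (v k) + ‖v k‖ ^ 2 := by
    intro k
    rw [norm_sub_sq_real]
  have hsum : ∑ k, p k * inner ℝ m (v k) = (‖m‖ : ℝ) ^ 2 := by
    calc ∑ k, p k * (inner ℝ m (v k) : ℝ) = ∑ k, (inner ℝ m (p k • v k) : ℝ) := by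
          simp [real_inner_smul_right]
      _ = inner ℝ m m := by rw [← inner_sum, ← hm]
      _ = ‖m‖ ^ 2 := real_inner_self_eq_norm_sq m
  calc ∑ k, p k * ‖m - v k‖ ^ 2
      = ∑ k, (p k * ‖m‖ ^ 2 - 2 * (p k * inner ℝ m (v k)) + p k * ‖v k‖ ^ 2) := by
        apply Finset.sum_congr rfl; intro k _; rw [key k]; ring
    _ = (∑ k, p k) * ‖m‖ ^ 2 - 2 * (∑ k, p k * inner ℝ m (v k)) + ∑ k, p k * ‖v k‖ ^ 2 := by
        rw [Finset.sum_add_distrib, Finset.sum_sub_distrib, ← Finset.sum_mul, ← Finset.mul_sum]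
    _ = ∑ k, p k * ‖v k‖ ^ 2 - ‖m‖ ^ 2 := by rw [hpsum, hsum]; ring
    _ ≤ ∑ k, p k * ‖v k‖ ^ 2 := by
        have := sq_nonneg ‖m‖; linarith

end Helpers

/-- FedAvg divergence bound: within at most `E - 1` local SGD steps since the last
synchronization, the weighted divergence of local models from their average is bounded
by `4 η_t² (E-1)² G²`. -/
theorem stmt_5 {d N : ℕ} {Ω : Type*} [MeasureSpace Ω]
    [IsProbabilityMeasure (volume : Measure Ω)]
    (E : ℕ) (hE : 1 ≤ E)
    (t0 t : ℕ) (ht0 : t0 ≤ t) (hsteps : t - t0 ≤ E - 1)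
    (w g : ℕ → Fin N → Ω → EuclideanSpace ℝ (Fin d))
    (η : ℕ → ℝ) (G : ℝ) (hG : 0 ≤ G)
    (p : Fin N → ℝ) (hp : ∀ k, 0 ≤ p k) (hpsum : ∑ k, p k = 1)
    (hηpos : ∀ s, 0 ≤ η s)
    (hηmono : ∀ s, η (s + 1) ≤ η s)
    (hηE : ∀ s, η s ≤ 2 * η (s + E))
    (hupdate : ∀ s, t0 ≤ s → s < t → ∀ k ω,
      w (s + 1) k ω = w s k ω - η s • g s k ω)
    (hinit : ∀ k k', w t0 k = w t0 k')
    (hgrad : ∀ s k, ∫ ω, ‖g s k ω‖ ^ 2 ≤ G ^ 2)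
    (hint : ∀ s k, Integrable (fun ω => ‖g s k ω‖ ^ 2)) :
    ∫ ω, ∑ k, p k * ‖(∑ k', p k' • w t k' ω) - w t k ω‖ ^ 2
      ≤ 4 * (η t) ^ 2 * ((E : ℝ) - 1) ^ 2 * G ^ 2 := by
  have hanti : Antitone η := antitone_nat_of_succ_le hηmono
  set n : ℕ := t - t0 with hn
  -- telescoping
  have htel : ∀ u, t0 ≤ u → u ≤ t → ∀ k ω,
      w u k ω = w t0 k ω - ∑ s ∈ Finset.Ico t0 u, η s • g s k ω := by
    intro u hu; induction u, hu using Nat.le_induction with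
    | base => intro _ k ω; simp
    | succ u hu ih =>
      intro hut k ω
      rw [hupdate u hu (by omega) k ω, ih (by omega) k ω,
        Finset.sum_Ico_succ_top (by omega)]
      abel
  -- pointwise bound
  set B : Ω → ℝ := fun ω => ∑ k, p k * ((n : ℝ) * ∑ s ∈ Finset.Ico t0 t, (η s) ^ 2 * ‖g s k ω‖ ^ 2)
    with hB
  have hpt : ∀ ω, ∑ k, p k * ‖(∑ k', p k' • w t k' ω) - w t k ω‖ ^ 2 ≤ B ω := by
    intro ω
    -- rewrite mean difference using v k = w t k ω - w t0 k ω
    have hmean : ∀ k, (∑ k', p k' • w t k' ω) - w t k ω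
        = (∑ k', p k' • (w t k' ω - w t0 k' ω)) - (w t k ω - w t0 k ω) := by
      intro k
      have h0 : ∑ k', p k' • w t0 k' ω = w t0 k ω := by
        have : ∀ k', w t0 k' ω = w t0 k ω := fun k' => congrFun (hinit k' k) ω
        simp_rw [this, ← Finset.sum_smul, hpsum, one_smul]
      simp_rw [smul_sub, Finset.sum_sub_distrib, h0]
      abel
    calc ∑ k, p k * ‖(∑ k', p k' • w t k' ω) - w t k ω‖ ^ 2
        = ∑ k, p k * ‖(∑ k', p k' • (w t k' ω - w t0 k' ω)) - (w t k ω - w t0 k ω)‖ ^ 2 := by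
          simp_rw [hmean]
      _ ≤ ∑ k, p k * ‖w t k ω - w t0 k ω‖ ^ 2 :=
          var_bound p hp hpsum _
      _ ≤ B ω := by
          apply Finset.sum_le_sum
          intro k _
          apply mul_le_mul_of_nonneg_left _ (hp k)
          have : w t k ω - w t0 k ω = -∑ s ∈ Finset.Ico t0 t, η s • g s k ω := by
            rw [htel t ht0 le_rfl k ω]; abel
          rw [this, norm_neg]
          calc ‖∑ s ∈ Finset.Ico t0 t, η s • g s k ω‖ ^ 2
              ≤ ((Finset.Ico t0 t).card : ℝ) * ∑ s ∈ Finset.Ico t0 t, ‖η s • g s k ω‖ ^ 2 :=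
                jensen_sq _ _
            _ = (n : ℝ) * ∑ s ∈ Finset.Ico t0 t, (η s) ^ 2 * ‖g s k ω‖ ^ 2 := by
                rw [Nat.card_Ico]
                congr 1
                apply Finset.sum_congr rfl
                intro s _
                rw [norm_smul, mul_pow, Real.norm_eq_abs, sq_abs]
  -- integrability of B
  have hBint : Integrable B := by
    apply integrable_finset_sum
    intro k _
    apply Integrable.const_mul
    apply Integrable.const_mul
    apply integrable_finset_sum
    intro s _
    exact (hint s k).const_mul _
  have h1 : ∫ ω, ∑ k, p k * ‖(∑ k', p k' • w t k' ω) - w t k ω‖ ^ 2 ≤ ∫ ω, B ω := by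
    apply integral_mono_of_nonneg
    · filter_upwards with ω
      exact Finset.sum_nonneg fun k _ => mul_nonneg (hp k) (by positivity)
    · exact hBint
    · filter_upwards with ω using hpt ω
  -- η bound: for s ∈ [t0, t), η s ≤ 2 η t
  have hηbd : ∀ s, t0 ≤ s → (η s) ^ 2 ≤ 4 * (η t) ^ 2 := by
    intro s hs
    have h1 : η s ≤ η t0 := hanti hs
    have h2 : η t0 ≤ 2 * η (t0 + E) := hηE t0
    have h3 : η (t0 + E) ≤ η t := by
      apply hanti; omega
    have h4 : η s ≤ 2 * η t := by linarith [hηpos (t0 + E)]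
    have := hηpos s
    nlinarith [hηpos t]
  -- compute / bound ∫ B
  have h2 : ∫ ω, B ω ≤ 4 * (η t) ^ 2 * ((E : ℝ) - 1) ^ 2 * G ^ 2 := by
    rw [hB, integral_finset_sum _ (fun k _ => by
      exact ((integrable_finset_sum _ (fun s _ => (hint s k).const_mul _)).const_mul _).const_mul _)]
    have hEn : (n : ℝ) ≤ (E : ℝ) - 1 := by
      have : ((E - 1 : ℕ) : ℝ) = (E : ℝ) - 1 := by
        rw [Nat.cast_sub hE]; norm_num
      rw [← this]; exact_mod_cast hsteps
    have hnn : (0 : ℝ) ≤ n := Nat.cast_nonneg n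
    calc ∑ k, ∫ ω, p k * ((n : ℝ) * ∑ s ∈ Finset.Ico t0 t, (η s) ^ 2 * ‖g s k ω‖ ^ 2)
        = ∑ k, p k * ((n : ℝ) * ∑ s ∈ Finset.Ico t0 t, (η s) ^ 2 * ∫ ω, ‖g s k ω‖ ^ 2) := by
          apply Finset.sum_congr rfl
          intro k _
          rw [integral_const_mul, integral_const_mul,
            integral_finset_sum _ (fun s _ => (hint s k).const_mul _)]
          simp_rw [integral_const_mul]
      _ ≤ ∑ k, p k * ((n : ℝ) * ∑ s ∈ Finset.Ico t0 t, 4 * (η t) ^ 2 * G ^ 2) := by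
          apply Finset.sum_le_sum
          intro k _
          apply mul_le_mul_of_nonneg_left _ (hp k)
          apply mul_le_mul_of_nonneg_left _ hnn
          apply Finset.sum_le_sum
          intro s hs
          rw [Finset.mem_Ico] at hs
          have hη2 := hηbd s hs.1
          have hI : ∫ ω, ‖g s k ω‖ ^ 2 ≤ G ^ 2 := hgrad s k
          have hInn : (0:ℝ) ≤ ∫ ω, ‖g s k ω‖ ^ 2 := integral_nonneg (fun ω => by positivity)
          nlinarith [sq_nonneg (η s), sq_nonneg (η t)]
      _ = (n : ℝ) ^ 2 * (4 * (η t) ^ 2 * G ^ 2) := by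
          rw [← Finset.sum_mul, hpsum, Finset.sum_const, Nat.card_Ico, ← hn]
          push_cast
          ring
      _ ≤ 4 * (η t) ^ 2 * ((E : ℝ) - 1) ^ 2 * G ^ 2 := by
          have h5 : (n : ℝ) ^ 2 ≤ ((E : ℝ) - 1) ^ 2 := by
            apply pow_le_pow_left₀ hnn hEn
          calc (n : ℝ) ^ 2 * (4 * (η t) ^ 2 * G ^ 2)
              ≤ ((E : ℝ) - 1) ^ 2 * (4 * (η t) ^ 2 * G ^ 2) :=
                mul_le_mul_of_nonneg_right h5 (by positivity)
            _ = 4 * (η t) ^ 2 * ((E : ℝ) - 1) ^ 2 * G ^ 2 := by ring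
  linarith
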